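/- (Connection with the classical divergence.) Let (x*, y*) be an interior Nash equilibrium with value u*, and suppose the reactive strategy X has all columns equal to a single mixed strategy x ∈ Δ^{m_X−1} with positive entries, i.e. x_{i|j} = x_i for all j. Then for any y ∈ Δ^{m_Y−1}, (y − y*)ᵀ Xᵀ U (y − y*) = 0; consequently, along the replicator dynamics the instantaneous time derivative of the conditional-sum divergence D(X, y) at such a point is 0, matching the conservation of the classical divergence D_c(x,y) = D_KL(x* ‖ x) + D_KL(y* ‖ y) in the memoryless game. -/

import Mathlib

lemma stmt15_key {mX mY : ℕ} (U : Fin mX → Fin mY → ℝ)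
    (xs : Fin mX → ℝ) (ys : Fin mY → ℝ) (ustar : ℝ)
    (hxssum : ∑ i : Fin mX, xs i = 1) (hyssum : ∑ j : Fin mY, ys j = 1)
    (hNx : ∀ j, ∑ i : Fin mX, U i j * xs i = ustar)
    (hNy : ∀ i, ∑ j : Fin mY, U i j * ys j = ustar)
    (x : Fin mX → ℝ) (hxne : ∀ i, x i ≠ 0) (hxsum : ∑ i : Fin mX, x i = 1)
    (y : Fin mY → ℝ) (hyne : ∀ j, y j ≠ 0) (hy1 : ∑ j : Fin mY, y j = 1) :
    (∑ j : Fin mY, ∑ i : Fin mX, xs i *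
        (0 - (x i * ((y j * ∑ j' : Fin mY, U i j' * y j') -
          ∑ i' : Fin mX, x i' * (y j * ∑ j' : Fin mY, U i' j' * y j'))) / x i)) +
    ∑ j : Fin mY, ys j *
      (0 - (-(y j * (((∑ i : Fin mX, U i j * (∑ j' : Fin mY, x i * y j')) +
            ∑ i : Fin mX, x i * ∑ j' : Fin mY, U i j' * y j') -
          ∑ j₂ : Fin mY, y j₂ *
            ((∑ i : Fin mX, U i j₂ * (∑ j' : Fin mY, x i * y j')) +
              ∑ i : Fin mX, x i * ∑ j' : Fin mY, U i j' * y j')))) / y j) = 0 := by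
  -- abbreviations
  have hxy : ∀ i : Fin mX, ∑ j' : Fin mY, x i * y j' = x i := fun i => by
    rw [← Finset.mul_sum, hy1, mul_one]
  set A : ℝ := ∑ i : Fin mX, x i * ∑ j' : Fin mY, U i j' * y j' with hAdef
  -- ∑ i xs i * S i = ustar
  have hxS : ∑ i : Fin mX, xs i * ∑ j' : Fin mY, U i j' * y j' = ustar := by
    calc ∑ i : Fin mX, xs i * ∑ j' : Fin mY, U i j' * y j'
        = ∑ i : Fin mX, ∑ j' : Fin mY, U i j' * xs i * y j' := by
          refine Finset.sum_congr rfl fun i _ => ?_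
          rw [Finset.mul_sum]; exact Finset.sum_congr rfl fun j' _ => by ring
      _ = ∑ j' : Fin mY, ∑ i : Fin mX, U i j' * xs i * y j' := Finset.sum_comm
      _ = ∑ j' : Fin mY, (∑ i : Fin mX, U i j' * xs i) * y j' := by
          refine Finset.sum_congr rfl fun j' _ => ?_; rw [Finset.sum_mul]
      _ = ∑ j' : Fin mY, ustar * y j' := by simp only [hNx]
      _ = ustar := by rw [← Finset.mul_sum, hy1, mul_one]
  -- ∑ j ys j * B j = ustar
  have hB1 : ∑ j : Fin mY, ys j * ∑ i : Fin mX, U i j * x i = ustar := by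
    calc ∑ j : Fin mY, ys j * ∑ i : Fin mX, U i j * x i
        = ∑ j : Fin mY, ∑ i : Fin mX, x i * (U i j * ys j) := by
          refine Finset.sum_congr rfl fun j _ => ?_
          rw [Finset.mul_sum]; exact Finset.sum_congr rfl fun i _ => by ring
      _ = ∑ i : Fin mX, ∑ j : Fin mY, x i * (U i j * ys j) := Finset.sum_comm
      _ = ∑ i : Fin mX, x i * ∑ j : Fin mY, U i j * ys j := by
          refine Finset.sum_congr rfl fun i _ => ?_; rw [Finset.mul_sum]
      _ = ∑ i : Fin mX, x i * ustar := by simp only [hNy]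
      _ = ustar := by rw [← Finset.sum_mul, hxsum, one_mul]
  -- ∑ j y j * B j = A
  have hB2 : ∑ j : Fin mY, y j * ∑ i : Fin mX, U i j * x i = A := by
    rw [hAdef]
    calc ∑ j : Fin mY, y j * ∑ i : Fin mX, U i j * x i
        = ∑ j : Fin mY, ∑ i : Fin mX, x i * (U i j * y j) := by
          refine Finset.sum_congr rfl fun j _ => ?_
          rw [Finset.mul_sum]; exact Finset.sum_congr rfl fun i _ => by ring
      _ = ∑ i : Fin mX, ∑ j : Fin mY, x i * (U i j * y j) := Finset.sum_comm
      _ = ∑ i : Fin mX, x i * ∑ j' : Fin mY, U i j' * y j' := by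
          refine Finset.sum_congr rfl fun i _ => ?_; rw [Finset.mul_sum]
  -- per-column average for the X part
  have hA : ∀ j : Fin mY, ∑ i' : Fin mX, x i' * (y j * ∑ j' : Fin mY, U i' j' * y j')
      = y j * A := fun j => by
    rw [hAdef, Finset.mul_sum]; exact Finset.sum_congr rfl fun i' _ => by ring
  -- first double sum
  have h1 : (∑ j : Fin mY, ∑ i : Fin mX, xs i *
        (0 - (x i * ((y j * ∑ j' : Fin mY, U i j' * y j') -
          ∑ i' : Fin mX, x i' * (y j * ∑ j' : Fin mY, U i' j' * y j'))) / x i)) = A - ustar := by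
    calc (∑ j : Fin mY, ∑ i : Fin mX, xs i *
        (0 - (x i * ((y j * ∑ j' : Fin mY, U i j' * y j') -
          ∑ i' : Fin mX, x i' * (y j * ∑ j' : Fin mY, U i' j' * y j'))) / x i))
        = ∑ j : Fin mY, ∑ i : Fin mX,
            (xs i * (y j * A) - y j * (xs i * ∑ j' : Fin mY, U i j' * y j')) := by
          refine Finset.sum_congr rfl fun j _ => Finset.sum_congr rfl fun i _ => ?_
          rw [hA j, mul_div_cancel_left₀ _ (hxne i)]; ring
      _ = ∑ j : Fin mY, ((∑ i : Fin mX, xs i) * (y j * A) -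
            y j * ∑ i : Fin mX, xs i * ∑ j' : Fin mY, U i j' * y j') := by
          refine Finset.sum_congr rfl fun j _ => ?_
          rw [Finset.sum_sub_distrib, ← Finset.sum_mul, ← Finset.mul_sum]
      _ = ∑ j : Fin mY, y j * (A - ustar) := by
          refine Finset.sum_congr rfl fun j _ => ?_
          rw [hxssum, hxS]; ring
      _ = A - ustar := by rw [← Finset.sum_mul, hy1, one_mul]
  -- second sum
  have hE : ∑ j₂ : Fin mY, y j₂ * ((∑ i : Fin mX, U i j₂ * x i) + A) = A + A := by
    calc ∑ j₂ : Fin mY, y j₂ * ((∑ i : Fin mX, U i j₂ * x i) + A)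
        = ∑ j₂ : Fin mY, (y j₂ * ∑ i : Fin mX, U i j₂ * x i + y j₂ * A) := by
          refine Finset.sum_congr rfl fun j₂ _ => by ring
      _ = (∑ j₂ : Fin mY, y j₂ * ∑ i : Fin mX, U i j₂ * x i) +
            (∑ j₂ : Fin mY, y j₂) * A := by
          rw [Finset.sum_add_distrib, ← Finset.sum_mul]
      _ = A + A := by rw [hB2, hy1, one_mul]
  have h2 : (∑ j : Fin mY, ys j *
      (0 - (-(y j * (((∑ i : Fin mX, U i j * (∑ j' : Fin mY, x i * y j')) +
            ∑ i : Fin mX, x i * ∑ j' : Fin mY, U i j' * y j') -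
          ∑ j₂ : Fin mY, y j₂ *
            ((∑ i : Fin mX, U i j₂ * (∑ j' : Fin mY, x i * y j')) +
              ∑ i : Fin mX, x i * ∑ j' : Fin mY, U i j' * y j')))) / y j)) = ustar - A := by
    calc (∑ j : Fin mY, ys j *
      (0 - (-(y j * (((∑ i : Fin mX, U i j * (∑ j' : Fin mY, x i * y j')) +
            ∑ i : Fin mX, x i * ∑ j' : Fin mY, U i j' * y j') -
          ∑ j₂ : Fin mY, y j₂ *
            ((∑ i : Fin mX, U i j₂ * (∑ j' : Fin mY, x i * y j')) +
              ∑ i : Fin mX, x i * ∑ j' : Fin mY, U i j' * y j')))) / y j))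
        = ∑ j : Fin mY, ys j * (((∑ i : Fin mX, U i j * x i) + A) -
            ∑ j₂ : Fin mY, y j₂ * ((∑ i : Fin mX, U i j₂ * x i) + A)) := by
          refine Finset.sum_congr rfl fun j _ => ?_
          simp only [hxy, hAdef]
          rw [neg_div, mul_div_cancel_left₀ _ (hyne j)]; ring
      _ = ∑ j : Fin mY, ys j * (((∑ i : Fin mX, U i j * x i) + A) - (A + A)) := by
          simp only [hE]
      _ = ∑ j : Fin mY, (ys j * ∑ i : Fin mX, U i j * x i + ys j * (-A)) := by
          refine Finset.sum_congr rfl fun j _ => by ring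
      _ = (∑ j : Fin mY, ys j * ∑ i : Fin mX, U i j * x i) + (∑ j : Fin mY, ys j) * (-A) := by
          rw [Finset.sum_add_distrib, ← Finset.sum_mul]
      _ = ustar - A := by rw [hB1, hyssum]; ring
  rw [h1, h2]; ring

/-- Connection with the classical divergence: If the reactive strategy `X₀`
has all columns equal to a single mixed strategy `x` with positive entries, then for any
`y ∈ Δ^{m_Y−1}`, `(y − y*)ᵀ X₀ᵀ U (y − y*) = 0`; consequently, along the replicator
dynamics, the instantaneous time derivative of the conditional-sum divergence
`D(X, y) = Σ_j D_KL(x* ‖ x_j) + D_KL(y* ‖ y)` at such a point is `0`. -/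
theorem stmt_15 (mX mY : ℕ) (U : Fin mX → Fin mY → ℝ)
    -- interior Nash equilibrium (x*, y*) with value u*
    (xs : Fin mX → ℝ) (ys : Fin mY → ℝ) (ustar : ℝ)
    (hxspos : ∀ i, 0 < xs i) (hxssum : ∑ i : Fin mX, xs i = 1)
    (hyspos : ∀ j, 0 < ys j) (hyssum : ∑ j : Fin mY, ys j = 1)
    (hNx : ∀ j, ∑ i : Fin mX, U i j * xs i = ustar)
    (hNy : ∀ i, ∑ j : Fin mY, U i j * ys j = ustar)
    -- the reactive strategy X₀ whose columns all equal the mixed strategy x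
    (x : Fin mX → ℝ) (hxpos : ∀ i, 0 < x i) (hxsum : ∑ i : Fin mX, x i = 1)
    (X₀ : Fin mX → Fin mY → ℝ) (hX₀ : ∀ i j, X₀ i j = x i)
    (y : Fin mY → ℝ) (hy0 : ∀ j, 0 ≤ y j) (hy1 : ∑ j : Fin mY, y j = 1) :
    (∑ j : Fin mY, ∑ j' : Fin mY,
        (y j - ys j) * (∑ i : Fin mX, X₀ i j * U i j') * (y j' - ys j')) = 0 ∧
    (∀ (X : ℝ → Fin mX → Fin mY → ℝ) (Y : ℝ → Fin mY → ℝ) (t₀ : ℝ),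
      (∀ t i j, 0 < X t i j) → (∀ t j, 0 < Y t j) →
      (∀ t j, ∑ i : Fin mX, X t i j = 1) → (∀ t, ∑ j : Fin mY, Y t j = 1) →
      -- replicator dynamics of X
      (∀ t i j, HasDerivAt (fun s => X s i j)
        (X t i j * ((Y t j * ∑ j' : Fin mY, U i j' * Y t j') -
          ∑ i' : Fin mX, X t i' j * (Y t j * ∑ j' : Fin mY, U i' j' * Y t j'))) t) →
      -- replicator dynamics of Y
      (∀ t j, HasDerivAt (fun s => Y s j)
        (-(Y t j * (((∑ i : Fin mX, U i j * (∑ j' : Fin mY, X t i j' * Y t j')) +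
            ∑ i : Fin mX, X t i j * ∑ j' : Fin mY, U i j' * Y t j') -
          ∑ j₂ : Fin mY, Y t j₂ *
            ((∑ i : Fin mX, U i j₂ * (∑ j' : Fin mY, X t i j' * Y t j')) +
              ∑ i : Fin mX, X t i j₂ * ∑ j' : Fin mY, U i j' * Y t j')))) t) →
      X t₀ = X₀ → Y t₀ = y →
      HasDerivAt
        (fun s => (∑ j : Fin mY, ∑ i : Fin mX, xs i * Real.log (xs i / X s i j)) +
          ∑ j : Fin mY, ys j * Real.log (ys j / Y s j)) 0 t₀) := by
  constructor
  · -- part 1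
    have hsum0 : ∑ j : Fin mY, (y j - ys j) = 0 := by
      rw [Finset.sum_sub_distrib, hy1, hyssum, sub_self]
    calc (∑ j : Fin mY, ∑ j' : Fin mY,
        (y j - ys j) * (∑ i : Fin mX, X₀ i j * U i j') * (y j' - ys j'))
        = ∑ j : Fin mY, ((y j - ys j) *
            ∑ j' : Fin mY, (∑ i : Fin mX, x i * U i j') * (y j' - ys j')) := by
          refine Finset.sum_congr rfl fun j _ => ?_
          rw [Finset.mul_sum]
          refine Finset.sum_congr rfl fun j' _ => ?_
          simp only [hX₀]; ring
      _ = (∑ j : Fin mY, (y j - ys j)) *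
            ∑ j' : Fin mY, (∑ i : Fin mX, x i * U i j') * (y j' - ys j') := by
          rw [Finset.sum_mul]
      _ = 0 := by rw [hsum0, zero_mul]
  · -- part 2
    intro X Y t₀ hXp hYp hXs hYs hdX hdY hXt hYt
    have hyne : ∀ j, y j ≠ 0 := fun j => by
      have := hYp t₀ j; rw [hYt] at this; exact this.ne'
    -- derivative of each X-term
    have hfX : ∀ (j : Fin mY) (i : Fin mX),
        HasDerivAt (fun s => xs i * Real.log (xs i / X s i j))
          (xs i * (0 - (X t₀ i j * ((Y t₀ j * ∑ j' : Fin mY, U i j' * Y t₀ j') -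
            ∑ i' : Fin mX, X t₀ i' j * (Y t₀ j * ∑ j' : Fin mY, U i' j' * Y t₀ j'))) /
            X t₀ i j)) t₀ := by
      intro j i
      have h2 := (hdX t₀ i j).log (hXp t₀ i j).ne'
      have h3 := HasDerivAt.const_mul (xs i)
        ((hasDerivAt_const t₀ (Real.log (xs i))).sub h2)
      have heq : (fun s => xs i * Real.log (xs i / X s i j)) =
          fun s => xs i * (Real.log (xs i) - Real.log (X s i j)) :=
        funext fun s => by rw [Real.log_div (hxspos i).ne' (hXp s i j).ne']
      rw [heq]; exact h3
    -- derivative of each Y-term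
    have hfY : ∀ (j : Fin mY),
        HasDerivAt (fun s => ys j * Real.log (ys j / Y s j))
          (ys j * (0 -
            (-(Y t₀ j * (((∑ i : Fin mX, U i j * (∑ j' : Fin mY, X t₀ i j' * Y t₀ j')) +
                ∑ i : Fin mX, X t₀ i j * ∑ j' : Fin mY, U i j' * Y t₀ j') -
              ∑ j₂ : Fin mY, Y t₀ j₂ *
                ((∑ i : Fin mX, U i j₂ * (∑ j' : Fin mY, X t₀ i j' * Y t₀ j')) +
                  ∑ i : Fin mX, X t₀ i j₂ * ∑ j' : Fin mY, U i j' * Y t₀ j')))) /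
            Y t₀ j)) t₀ := by
      intro j
      have h2 := (hdY t₀ j).log (hYp t₀ j).ne'
      have h3 := HasDerivAt.const_mul (ys j)
        ((hasDerivAt_const t₀ (Real.log (ys j))).sub h2)
      have heq : (fun s => ys j * Real.log (ys j / Y s j)) =
          fun s => ys j * (Real.log (ys j) - Real.log (Y s j)) :=
        funext fun s => by rw [Real.log_div (hyspos j).ne' (hYp s j).ne']
      rw [heq]; exact h3
    have hsum1 : HasDerivAt
        (fun s => ∑ j : Fin mY, ∑ i : Fin mX, xs i * Real.log (xs i / X s i j))
        (∑ j : Fin mY, ∑ i : Fin mX,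
          xs i * (0 - (X t₀ i j * ((Y t₀ j * ∑ j' : Fin mY, U i j' * Y t₀ j') -
            ∑ i' : Fin mX, X t₀ i' j * (Y t₀ j * ∑ j' : Fin mY, U i' j' * Y t₀ j'))) /
            X t₀ i j)) t₀ :=
      HasDerivAt.fun_sum fun j _ => HasDerivAt.fun_sum fun i _ => hfX j i
    have hsum2 : HasDerivAt
        (fun s => ∑ j : Fin mY, ys j * Real.log (ys j / Y s j))
        (∑ j : Fin mY, ys j * (0 -
            (-(Y t₀ j * (((∑ i : Fin mX, U i j * (∑ j' : Fin mY, X t₀ i j' * Y t₀ j')) +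
                ∑ i : Fin mX, X t₀ i j * ∑ j' : Fin mY, U i j' * Y t₀ j') -
              ∑ j₂ : Fin mY, Y t₀ j₂ *
                ((∑ i : Fin mX, U i j₂ * (∑ j' : Fin mY, X t₀ i j' * Y t₀ j')) +
                  ∑ i : Fin mX, X t₀ i j₂ * ∑ j' : Fin mY, U i j' * Y t₀ j')))) /
            Y t₀ j)) t₀ :=
      HasDerivAt.fun_sum fun j _ => hfY j
    have htot := hsum1.add hsum2
    have hzero : (∑ j : Fin mY, ∑ i : Fin mX,
          xs i * (0 - (X t₀ i j * ((Y t₀ j * ∑ j' : Fin mY, U i j' * Y t₀ j') -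
            ∑ i' : Fin mX, X t₀ i' j * (Y t₀ j * ∑ j' : Fin mY, U i' j' * Y t₀ j'))) /
            X t₀ i j)) +
        (∑ j : Fin mY, ys j * (0 -
            (-(Y t₀ j * (((∑ i : Fin mX, U i j * (∑ j' : Fin mY, X t₀ i j' * Y t₀ j')) +
                ∑ i : Fin mX, X t₀ i j * ∑ j' : Fin mY, U i j' * Y t₀ j') -
              ∑ j₂ : Fin mY, Y t₀ j₂ *
                ((∑ i : Fin mX, U i j₂ * (∑ j' : Fin mY, X t₀ i j' * Y t₀ j')) +
                  ∑ i : Fin mX, X t₀ i j₂ * ∑ j' : Fin mY, U i j' * Y t₀ j')))) /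
            Y t₀ j)) = 0 := by
      simp only [hXt, hYt, hX₀]
      exact stmt15_key U xs ys ustar hxssum hyssum hNx hNy x
        (fun i => (hxpos i).ne') hxsum y hyne hy1
    exact hzero ▸ htot
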